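/- For a T0 space X, the following conditions are equivalent: (1) X is locally compact and sober; (2) X is locally compact and well-filtered; (3) X is core compact and sober; (4) X is core compact and well-filtered. -/

import Mathlib

open Set Topology

universe u

variable {X : Type u}

/-- Specialization order: `x ≤ y` iff `x ∈ closure {y}`. -/
def specLE [TopologicalSpace X] (x y : X) : Prop := x ∈ closure ({y} : Set X)

/-- Directed subset w.r.t. the specialization order. -/
def dirOn [TopologicalSpace X] (D : Set X) : Prop :=
  D.Nonempty ∧ ∀ a ∈ D, ∀ b ∈ D, ∃ c ∈ D, specLE a c ∧ specLE b c

/-- Downward closure w.r.t. the specialization order. -/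
def dClo [TopologicalSpace X] (A : Set X) : Set X := {x | ∃ a ∈ A, specLE x a}

/-- Upward closure w.r.t. the specialization order. -/
def uClo [TopologicalSpace X] (A : Set X) : Set X := {x | ∃ a ∈ A, specLE a x}

/-- `x` is a supremum of `D` w.r.t. the specialization order. -/
def IsSupOf [TopologicalSpace X] (D : Set X) (x : X) : Prop :=
  (∀ d ∈ D, specLE d x) ∧ ∀ y, (∀ d ∈ D, specLE d y) → specLE x y

/-- A d-space: a T0 space in which every directed set (for the specialization order)
has a supremum, and every open set is inaccessible by directed suprema. -/
def IsDSpace (X : Type u) [TopologicalSpace X] : Prop :=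
  T0Space X ∧ (∀ D : Set X, dirOn D → ∃ x, IsSupOf D x) ∧
    ∀ D : Set X, dirOn D → ∀ x, IsSupOf D x →
      ∀ U : Set X, IsOpen U → x ∈ U → (D ∩ U).Nonempty

/-- A set is saturated if it is the intersection of the open sets containing it. -/
def IsSat [TopologicalSpace X] (A : Set X) : Prop :=
  A = ⋂₀ {U : Set X | IsOpen U ∧ A ⊆ U}

/-- The collection of nonempty compact saturated subsets. -/
def KSet (X : Type u) [TopologicalSpace X] : Set (Set X) :=
  {K | K.Nonempty ∧ IsCompact K ∧ IsSat K}

/-- A filtered family of sets: nonempty, and every two members contain a common member. -/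
def FiltFam [TopologicalSpace X] (𝒦 : Set (Set X)) : Prop :=
  𝒦.Nonempty ∧ ∀ K₁ ∈ 𝒦, ∀ K₂ ∈ 𝒦, ∃ K₃ ∈ 𝒦, K₃ ⊆ K₁ ∧ K₃ ⊆ K₂

/-- Well-filtered space. -/
def IsWF (X : Type u) [TopologicalSpace X] : Prop :=
  T0Space X ∧ ∀ 𝒦 : Set (Set X), 𝒦 ⊆ KSet X → FiltFam 𝒦 →
    ∀ U : Set X, IsOpen U → ⋂₀ 𝒦 ⊆ U → ∃ K ∈ 𝒦, K ⊆ U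

/-- Sober space: every irreducible closed subset is the closure of a unique point. -/
def IsSober (X : Type u) [TopologicalSpace X] : Prop :=
  ∀ A : Set X, IsIrreducible A → IsClosed A → ∃! x : X, A = closure {x}

/-- `V` is way below `U` in the lattice of open sets: every open cover of `U`
has a finite subfamily covering `V`. -/
def wayBelow [TopologicalSpace X] (V U : Set X) : Prop :=
  ∀ 𝒞 : Set (Set X), (∀ W ∈ 𝒞, IsOpen W) → U ⊆ ⋃₀ 𝒞 →
    ∃ 𝒟 ⊆ 𝒞, 𝒟.Finite ∧ V ⊆ ⋃₀ 𝒟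

/-- Core compact space. -/
def CoreCompact (X : Type u) [TopologicalSpace X] : Prop :=
  ∀ (x : X) (U : Set X), IsOpen U → x ∈ U →
    ∃ V : Set X, IsOpen V ∧ x ∈ V ∧ wayBelow V U

/-- The underlying type of the Smyth power space: nonempty compact saturated subsets. -/
abbrev KS (X : Type u) [TopologicalSpace X] : Type u :=
  {K : Set X // K.Nonempty ∧ IsCompact K ∧ IsSat K}

/-- The upper Vietoris topology on `KS X`, generated by the sets
`□U = {K | K ⊆ U}` for `U` open; this makes `KS X` the Smyth power space `P_S(X)`. -/
instance (X : Type u) [TopologicalSpace X] : TopologicalSpace (KS X) :=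
  TopologicalSpace.generateFrom
    {S | ∃ U : Set X, IsOpen U ∧ S = {K : KS X | (K : Set X) ⊆ U}}

/-- Rudin set: a nonempty closed set that is a minimal closed set meeting all
members of some filtered family of nonempty compact saturated sets. -/
def RudinSet [TopologicalSpace X] (A : Set X) : Prop :=
  IsClosed A ∧ A.Nonempty ∧ ∃ 𝒦 : Set (Set X), 𝒦 ⊆ KSet X ∧ FiltFam 𝒦 ∧
    (∀ K ∈ 𝒦, (K ∩ A).Nonempty) ∧
    ∀ B : Set X, IsClosed B → B ⊆ A → (∀ K ∈ 𝒦, (K ∩ B).Nonempty) → B = A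

/-- Well-filtered determined (WD) set. -/
def IsWDSet [TopologicalSpace X] (A : Set X) : Prop :=
  IsClosed A ∧ A.Nonempty ∧ ∀ (Y : Type u) [TopologicalSpace Y], IsWF Y →
    ∀ f : X → Y, Continuous f → ∃ y : Y, closure (f '' A) = closure {y}

/-- Rudin space: every irreducible closed set is a Rudin set. -/
def RudinSpace (X : Type u) [TopologicalSpace X] : Prop :=
  ∀ A : Set X, IsClosed A → IsIrreducible A → RudinSet A

/-- WD space: every irreducible closed set is a WD set. -/
def WDSpace (X : Type u) [TopologicalSpace X] : Prop :=
  ∀ A : Set X, IsClosed A → IsIrreducible A → IsWDSet A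

/-- DC space: every irreducible closed set is the closure of a directed set. -/
def DCSpace (X : Type u) [TopologicalSpace X] : Prop :=
  ∀ A : Set X, IsClosed A → IsIrreducible A → ∃ D : Set X, dirOn D ∧ A = closure D

section WFP
variable [TopologicalSpace X]

/-- saturation of a set -/
def wfpSat (S : Set X) : Set X := ⋂₀ {U : Set X | IsOpen U ∧ S ⊆ U}

lemma wfp_subset_sat (S : Set X) : S ⊆ wfpSat S := fun _x hx _U hU => hU.2 hx

lemma wfp_sat_subset {S U : Set X} (hU : IsOpen U) (h : S ⊆ U) : wfpSat S ⊆ U :=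
  fun _x hx => hx U ⟨hU, h⟩

lemma wfp_sat_mono {S T : Set X} (h : S ⊆ T) : wfpSat S ⊆ wfpSat T :=
  fun _x hx U hU => hx U ⟨hU.1, h.trans hU.2⟩

lemma wfp_isSat_sat (S : Set X) : IsSat (wfpSat S) := by
  apply Set.Subset.antisymm
  · intro x hx U hU
    exact hU.2 hx
  · intro x hx U hU
    exact hx U ⟨hU.1, wfp_sat_subset hU.1 hU.2⟩

lemma wfp_sat_compact {S : Set X} (h : IsCompact S) : IsCompact (wfpSat S) := by
  apply isCompact_of_finite_subcover
  intro ι U hUo hcov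
  obtain ⟨t, ht⟩ := h.elim_finite_subcover U hUo ((wfp_subset_sat S).trans hcov)
  exact ⟨t, wfp_sat_subset (isOpen_biUnion fun i _ => hUo i) ht⟩

lemma wayBelow_subset {V U : Set X} (h : wayBelow V U) (hU : IsOpen U) : V ⊆ U := by
  obtain ⟨D, hDsub, _, hVD⟩ := h {U} (by rintro W rfl; exact hU) (subset_sUnion_of_mem rfl)
  exact hVD.trans (sUnion_subset fun W hW => by rw [hDsub hW])

lemma wfp_directed_finite_ub {𝒪 : Set (Set X)} (hdir : DirectedOn (· ⊆ ·) 𝒪) (hne : 𝒪.Nonempty)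
    (D : Set (Set X)) (hfin : D.Finite) : D ⊆ 𝒪 → ∃ O ∈ 𝒪, ∀ d ∈ D, d ⊆ O := by
  classical
  refine Set.Finite.induction_on (motive := fun D _ => D ⊆ 𝒪 → ∃ O ∈ 𝒪, ∀ d ∈ D, d ⊆ O) D hfin ?_ ?_
  · intro _
    obtain ⟨O, hO⟩ := hne
    exact ⟨O, hO, fun d hd => absurd hd (notMem_empty d)⟩
  · intro a s _ha _hs ih hsub
    obtain ⟨O, hO, hub⟩ := ih (fun d hd => hsub (mem_insert_of_mem _ hd))
    obtain ⟨O', hO', h1, h2⟩ := hdir a (hsub (mem_insert _ _)) O hO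
    refine ⟨O', hO', ?_⟩
    intro d hd
    rcases mem_insert_iff.mp hd with rfl | hd
    · exact h1
    · exact (hub d hd).trans h2

lemma wfp_absorb {V W : Set X} (h : wayBelow V W) {𝒪 : Set (Set X)} (ho : ∀ O ∈ 𝒪, IsOpen O)
    (hdir : DirectedOn (· ⊆ ·) 𝒪) (hne : 𝒪.Nonempty) (hcov : W ⊆ ⋃₀ 𝒪) :
    ∃ O ∈ 𝒪, V ⊆ O := by
  obtain ⟨D, hDsub, hDfin, hVD⟩ := h 𝒪 ho hcov
  obtain ⟨O, hO, hub⟩ := wfp_directed_finite_ub hdir hne D hDfin hDsub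
  exact ⟨O, hO, hVD.trans (sUnion_subset hub)⟩

lemma wfp_compact_absorb {K : Set X} (hK : IsCompact K) {𝒪 : Set (Set X)}
    (ho : ∀ O ∈ 𝒪, IsOpen O) (hdir : DirectedOn (· ⊆ ·) 𝒪) (hne : 𝒪.Nonempty)
    (hcov : K ⊆ ⋃₀ 𝒪) : ∃ O ∈ 𝒪, K ⊆ O := by
  obtain ⟨t, ht⟩ := hK.elim_finite_subcover (fun O : 𝒪 => (O : Set X))
    (fun O => ho O O.2) (by rwa [← sUnion_eq_iUnion])
  obtain ⟨O, hO, hub⟩ := wfp_directed_finite_ub hdir hne ((fun O : 𝒪 => (O : Set X)) '' ↑t)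
    (t.finite_toSet.image _) (by rintro _ ⟨O, _, rfl⟩; exact O.2)
  refine ⟨O, hO, ht.trans ?_⟩
  exact iUnion₂_subset fun C hC => hub _ ⟨C, hC, rfl⟩

lemma wayBelow_indexed {V U : Set X} (h : wayBelow V U) {ι : Type u} (f : ι → Set X)
    (ho : ∀ i, IsOpen (f i)) (hcov : U ⊆ ⋃ i, f i) :
    ∃ t : Finset ι, V ⊆ ⋃ i ∈ t, f i := by
  classical
  obtain ⟨D, hDsub, hDfin, hVD⟩ := h (range f) (by rintro _ ⟨i, rfl⟩; exact ho i)
    (by rwa [sUnion_range])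
  haveI := hDfin.fintype
  choose g hg using fun d : D => hDsub d.2
  refine ⟨Finset.univ.image g, ?_⟩
  intro x hx
  obtain ⟨Wd, hWD, hxW⟩ := hVD hx
  refine mem_biUnion (Finset.mem_image_of_mem g (Finset.mem_univ ⟨Wd, hWD⟩)) ?_
  rw [hg ⟨Wd, hWD⟩]; exact hxW

end WFP

section WFP2
variable [TopologicalSpace X]

lemma wfp_interpolate (hcc : CoreCompact X) {V U : Set X} (hU : IsOpen U)
    (hVU : wayBelow V U) : ∃ W, IsOpen W ∧ wayBelow V W ∧ wayBelow W U := by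
  classical
  set 𝒞 : Set (Set X) := {O | IsOpen O ∧ ∃ O', IsOpen O' ∧ wayBelow O O' ∧ wayBelow O' U}
    with h𝒞
  have hcov : U ⊆ ⋃₀ 𝒞 := by
    intro u hu
    obtain ⟨O', hO'o, huO', hO'U⟩ := hcc u U hU hu
    obtain ⟨O, hOo, huO, hOO'⟩ := hcc u O' hO'o huO'
    exact ⟨O, ⟨hOo, O', hO'o, hOO', hO'U⟩, huO⟩
  obtain ⟨D, hDsub, hDfin, hVD⟩ := hVU 𝒞 (fun O hO => hO.1) hcov
  haveI := hDfin.fintype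
  choose O' hO'1 hO'2 hO'3 using fun d : D => (hDsub d.2).2
  refine ⟨⋃ d : D, O' d, isOpen_iUnion fun d => hO'1 d, ?_, ?_⟩
  · intro 𝒢 h𝒢o h𝒢cov
    have hstep : ∀ d : D, ∃ E ⊆ 𝒢, E.Finite ∧ (d : Set X) ⊆ ⋃₀ E := fun d =>
      hO'2 d 𝒢 h𝒢o ((subset_iUnion (fun d : D => O' d) d).trans h𝒢cov)
    choose E hE1 hE2 hE3 using hstep
    refine ⟨⋃ d : D, E d, iUnion_subset hE1, finite_iUnion hE2, ?_⟩
    intro x hx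
    obtain ⟨d, hd, hxd⟩ := hVD hx
    obtain ⟨e, he, hxe⟩ := hE3 ⟨d, hd⟩ hxd
    exact ⟨e, ⟨E ⟨d, hd⟩, ⟨⟨d, hd⟩, rfl⟩, he⟩, hxe⟩
  · intro 𝒢 h𝒢o h𝒢cov
    have hstep : ∀ d : D, ∃ E ⊆ 𝒢, E.Finite ∧ O' d ⊆ ⋃₀ E := fun d =>
      hO'3 d 𝒢 h𝒢o h𝒢cov
    choose E hE1 hE2 hE3 using hstep
    refine ⟨⋃ d : D, E d, iUnion_subset hE1, finite_iUnion hE2, ?_⟩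
    intro x hx
    obtain ⟨d, hxd⟩ := mem_iUnion.mp hx
    obtain ⟨e, he, hxe⟩ := hE3 d hxd
    exact ⟨e, ⟨E d, ⟨d, rfl⟩, he⟩, hxe⟩

lemma wfp_chain (hcc : CoreCompact X) {V U : Set X} (hU : IsOpen U) (hVU : wayBelow V U) :
    ∃ W : ℕ → Set X, W 0 = U ∧ (∀ n, IsOpen (W n)) ∧ (∀ n, wayBelow V (W n)) ∧
      ∀ n, wayBelow (W (n+1)) (W n) := by
  classical
  let nxt : Set X → Set X := fun Wc =>
    if h : IsOpen Wc ∧ wayBelow V Wc then Classical.choose (wfp_interpolate hcc h.1 h.2) else ∅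
  let W : ℕ → Set X := fun n => Nat.rec U (fun _ prev => nxt prev) n
  have hWsucc : ∀ n, W (n+1) = nxt (W n) := fun n => rfl
  have hW0 : W 0 = U := rfl
  have hinv : ∀ n, IsOpen (W n) ∧ wayBelow V (W n) := by
    intro n
    induction n with
    | zero => exact ⟨hU, hVU⟩
    | succ k ih =>
      rw [hWsucc k]
      have := Classical.choose_spec (wfp_interpolate hcc ih.1 ih.2)
      simp only [nxt, dif_pos ih]
      exact ⟨this.1, this.2.1⟩
  have hlink : ∀ n, wayBelow (W (n+1)) (W n) := by
    intro n
    have ih := hinv n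
    rw [hWsucc n]
    have := Classical.choose_spec (wfp_interpolate hcc ih.1 ih.2)
    simp only [nxt, dif_pos ih]
    exact this.2.2
  exact ⟨W, hW0, fun n => (hinv n).1, fun n => (hinv n).2, hlink⟩

end WFP2

section WFP3
variable [TopologicalSpace X]

/-- The key lemma: in a well-filtered space, if `(W n)` is a `≪`-decreasing chain of opens
and `B₀` is a closed set meeting every `W n`, then `B₀` meets `⋂ n, W n`. -/
lemma wfp_diamond (hWF : IsWF X) {W : ℕ → Set X} (hWo : ∀ n, IsOpen (W n))
    (hWwb : ∀ n, wayBelow (W (n+1)) (W n)) {B₀ : Set X} (hB₀ : IsClosed B₀)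
    (hmeet : ∀ n, (B₀ ∩ W n).Nonempty) : (B₀ ∩ ⋂ n, W n).Nonempty := by
  classical
  have hWsub : ∀ n, W (n+1) ⊆ W n := fun n => wayBelow_subset (hWwb n) (hWo n)
  have hanti : Antitone W := antitone_nat_of_succ_le hWsub
  -- the collection of closed subsets of B₀ meeting every W n
  set ℭ : Set (Set X) := {C | IsClosed C ∧ C ⊆ B₀ ∧ ∀ n, (C ∩ W n).Nonempty} with hℭdef
  have hB₀ℭ : B₀ ∈ ℭ := ⟨hB₀, Subset.rfl, hmeet⟩
  have hchaincond : ∀ c ⊆ ℭ, IsChain (· ⊆ ·) c → c.Nonempty →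
      ∃ lb ∈ ℭ, ∀ s ∈ c, lb ⊆ s := by
    intro c hcsub hchain hcne
    refine ⟨⋂₀ c, ⟨isClosed_sInter fun C hC => (hcsub hC).1, ?_, ?_⟩,
      fun s hs => sInter_subset_of_mem hs⟩
    · obtain ⟨C, hC⟩ := hcne
      exact (sInter_subset_of_mem hC).trans (hcsub hC).2.1
    · intro n
      by_contra hemp
      rw [not_nonempty_iff_eq_empty] at hemp
      have hcov : W n ⊆ ⋃₀ (compl '' c) := by
        intro x hx
        by_contra hxnot
        have hxin : x ∈ ⋂₀ c := by
          intro C hC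
          by_contra hxC
          exact hxnot ⟨Cᶜ, ⟨C, hC, rfl⟩, hxC⟩
        have hmem : x ∈ (⋂₀ c ∩ W n) := ⟨hxin, hx⟩
        rw [hemp] at hmem
        exact hmem
      have hdir : DirectedOn (· ⊆ ·) (compl '' c) := by
        rintro _ ⟨C₁, hC₁, rfl⟩ _ ⟨C₂, hC₂, rfl⟩
        rcases eq_or_ne C₁ C₂ with rfl | hne
        · exact ⟨C₁ᶜ, ⟨C₁, hC₁, rfl⟩, Subset.rfl, Subset.rfl⟩
        · rcases hchain hC₁ hC₂ hne with h | h
          · exact ⟨C₁ᶜ, ⟨C₁, hC₁, rfl⟩, Subset.rfl, compl_subset_compl.mpr h⟩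
          · exact ⟨C₂ᶜ, ⟨C₂, hC₂, rfl⟩, compl_subset_compl.mpr h, Subset.rfl⟩
      obtain ⟨C, hC⟩ := hcne
      obtain ⟨_, ⟨C', hC', rfl⟩, habs⟩ := wfp_absorb (hWwb n)
        (by rintro _ ⟨C₀, hC₀, rfl⟩; exact (hcsub hC₀).1.isOpen_compl) hdir
        ⟨Cᶜ, ⟨C, hC, rfl⟩⟩ hcov
      obtain ⟨y, hy1, hy2⟩ := (hcsub hC').2.2 (n+1)
      exact habs hy2 hy1
  obtain ⟨B, _hBsub, hBmin⟩ := zorn_superset_nonempty ℭ hchaincond B₀ hB₀ℭ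
  obtain ⟨hBcl, hBB₀, hBW⟩ := hBmin.1
  have hmin : ∀ C ∈ ℭ, C ⊆ B → B ⊆ C := fun C hC hsub => hBmin.2 hC hsub
  -- Step (b): cluster-set lemma
  have key : ∀ S : Set X, S ⊆ B → (∀ n, (S ∩ W n).Nonempty) →
      ∀ j, B ⊆ closure (S ∩ W j) := by
    intro S hSB hSW
    have hDB : (⋂ j, closure (S ∩ W j)) ⊆ B := by
      refine (iInter_subset _ 0).trans ?_
      refine (closure_mono inter_subset_left).trans ?_
      rw [← hBcl.closure_eq]
      exact closure_mono hSB
    have hD : (⋂ j, closure (S ∩ W j)) ∈ ℭ := by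
      refine ⟨isClosed_iInter fun j => isClosed_closure, hDB.trans hBB₀, ?_⟩
      intro n
      by_contra hemp
      rw [not_nonempty_iff_eq_empty] at hemp
      set O : ℕ → Set X := fun j => W n ∩ (Bᶜ ∪ (closure (S ∩ W j))ᶜ) with hOdef
      have hOopen : ∀ j, IsOpen (O j) :=
        fun j => (hWo n).inter (hBcl.isOpen_compl.union isClosed_closure.isOpen_compl)
      have hOmono : Monotone O := by
        intro j k hjk
        refine inter_subset_inter Subset.rfl (union_subset_union Subset.rfl ?_)
        exact compl_subset_compl.mpr (closure_mono (inter_subset_inter Subset.rfl (hanti hjk)))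
      have hcov : W n ⊆ ⋃₀ (range O) := by
        intro x hx
        by_cases hxB : x ∈ B
        · have hxnot : x ∉ ⋂ j, closure (S ∩ W j) := by
            intro hxin
            have hmem : x ∈ (⋂ j, closure (S ∩ W j)) ∩ W n := ⟨hxin, hx⟩
            rw [hemp] at hmem
            exact hmem
          obtain ⟨j, hj⟩ := not_forall.mp (fun h => hxnot (mem_iInter.mpr h))
          exact ⟨O j, ⟨j, rfl⟩, hx, Or.inr hj⟩
        · exact ⟨O 0, ⟨0, rfl⟩, hx, Or.inl hxB⟩
      have hdir : DirectedOn (· ⊆ ·) (range O) := by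
        rintro _ ⟨j, rfl⟩ _ ⟨k, rfl⟩
        exact ⟨O (max j k), ⟨max j k, rfl⟩, hOmono (le_max_left j k), hOmono (le_max_right j k)⟩
      obtain ⟨_, ⟨j, rfl⟩, habs⟩ := wfp_absorb (hWwb n)
        (by rintro _ ⟨j, rfl⟩; exact hOopen j) hdir ⟨O 0, ⟨0, rfl⟩⟩ hcov
      obtain ⟨s, hsS, hsW⟩ := hSW (max j (n+1))
      have hsWn1 : s ∈ W (n+1) := hanti (le_max_right j (n+1)) hsW
      have := habs hsWn1
      rcases this.2 with h | h
      · exact h (hSB hsS)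
      · exact h (subset_closure ⟨hsS, hanti (le_max_left j (n+1)) hsW⟩)
    have hBD := hmin _ hD hDB
    intro j
    exact hBD.trans (iInter_subset _ j)
  -- Step (c): tail absorption
  have absorbS : ∀ S : Set X, S ⊆ B → (∀ n, (S ∩ W n).Nonempty) →
      ∀ 𝒪 : Set (Set X), (∀ O ∈ 𝒪, IsOpen O) → S ⊆ ⋃₀ 𝒪 →
      ∃ O ∈ 𝒪, ∃ j, S ∩ W j ⊆ O := by
    intro S hSB hSW 𝒪 h𝒪o hcov
    by_contra hcon
    push_neg at hcon
    obtain ⟨s₀, hs₀S, _hs₀W⟩ := hSW 0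
    obtain ⟨Os, hOs, hs₀O⟩ := hcov hs₀S
    have hS'W : ∀ n, ((S \ Os) ∩ W n).Nonempty := by
      intro n
      obtain ⟨x, hx1, hx2⟩ := not_subset.mp (hcon Os hOs n)
      exact ⟨x, ⟨hx1.1, hx2⟩, hx1.2⟩
    have hB' := key (S \ Os) (diff_subset.trans hSB) hS'W 0
    have hs₀B : s₀ ∈ B := hSB hs₀S
    obtain ⟨t, htO, htS', _⟩ := mem_closure_iff.mp (hB' hs₀B) Os (h𝒪o Os hOs) hs₀O
    exact htS'.2 htO
  -- choose a sequence x n ∈ B ∩ W n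
  choose xseq hx1 hx2 using hBW
  set Sj : ℕ → Set X := fun j => xseq '' Ici j with hSjdef
  have hSjB : ∀ j, Sj j ⊆ B := by
    rintro j _ ⟨m, _hm, rfl⟩
    exact hx1 m
  have hSjmono : ∀ j k, j ≤ k → Sj k ⊆ Sj j := by
    rintro j k hjk _ ⟨m, hm, rfl⟩
    exact ⟨m, le_trans hjk hm, rfl⟩
  have hSjW : ∀ j n, (Sj j ∩ W n).Nonempty := by
    intro j n
    refine ⟨xseq (max j n), ⟨max j n, le_max_left j n, rfl⟩, ?_⟩
    exact hanti (le_max_right j n) (hx2 (max j n))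
  have hSjWsub : ∀ j, Sj j ⊆ W j := by
    rintro j _ ⟨m, hm, rfl⟩
    exact hanti hm (hx2 m)
  -- each tail is a compact set
  have hSjcomp : ∀ j, IsCompact (Sj j) := by
    intro j
    apply isCompact_of_finite_subcover
    intro ι Ufam hUo hcov
    set 𝒪 : Set (Set X) := {O | ∃ t : Finset ι, O = ⋃ i ∈ t, Ufam i} with h𝒪def
    have h𝒪o : ∀ O ∈ 𝒪, IsOpen O := by
      rintro _ ⟨t, rfl⟩
      exact isOpen_biUnion fun i _ => hUo i
    have hcov' : Sj j ⊆ ⋃₀ 𝒪 := by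
      intro x hx
      obtain ⟨i, hi⟩ := mem_iUnion.mp (hcov hx)
      refine ⟨⋃ i' ∈ ({i} : Finset ι), Ufam i', ⟨{i}, rfl⟩, ?_⟩
      simp only [Finset.mem_singleton, iUnion_iUnion_eq_left]
      exact hi
    obtain ⟨_, ⟨t, rfl⟩, j', hOsub⟩ := absorbS (Sj j) (hSjB j) (hSjW j) 𝒪 h𝒪o hcov'
    have hhead : ∀ m : {m // m ∈ Finset.Ico j j'}, ∃ i : ι, xseq m.1 ∈ Ufam i := by
      intro m
      have hm := Finset.mem_Ico.mp m.2
      exact mem_iUnion.mp (hcov ⟨m.1, hm.1, rfl⟩)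
    choose g hg using hhead
    refine ⟨t ∪ Finset.univ.image g, ?_⟩
    rintro _ ⟨m, hm, rfl⟩
    by_cases hmj : j' ≤ m
    · have hmem : xseq m ∈ Sj j ∩ W j' := ⟨⟨m, hm, rfl⟩, hanti hmj (hx2 m)⟩
      obtain ⟨i, hi, hxi⟩ := mem_iUnion₂.mp (hOsub hmem)
      exact mem_iUnion₂.mpr ⟨i, Finset.mem_union_left _ hi, hxi⟩
    · have hmIco : m ∈ Finset.Ico j j' := Finset.mem_Ico.mpr ⟨hm, lt_of_not_ge hmj⟩
      refine mem_iUnion₂.mpr ⟨g ⟨m, hmIco⟩, ?_, hg ⟨m, hmIco⟩⟩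
      exact Finset.mem_union_right _ (Finset.mem_image_of_mem g (Finset.mem_univ _))
  -- the well-filtered family of saturations of tails
  set 𝒦 : Set (Set X) := range (fun j => wfpSat (Sj j)) with h𝒦def
  have h𝒦sub : 𝒦 ⊆ KSet X := by
    rintro _ ⟨j, rfl⟩
    exact ⟨⟨xseq j, wfp_subset_sat _ ⟨j, self_mem_Ici, rfl⟩⟩,
      wfp_sat_compact (hSjcomp j), wfp_isSat_sat _⟩
  have hfilt : FiltFam 𝒦 := by
    refine ⟨⟨_, ⟨0, rfl⟩⟩, ?_⟩
    rintro _ ⟨j₁, rfl⟩ _ ⟨j₂, rfl⟩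
    exact ⟨wfpSat (Sj (max j₁ j₂)), ⟨max j₁ j₂, rfl⟩,
      wfp_sat_mono (hSjmono _ _ (le_max_left j₁ j₂)),
      wfp_sat_mono (hSjmono _ _ (le_max_right j₁ j₂))⟩
  have hnot : ¬ ⋂₀ 𝒦 ⊆ Bᶜ := by
    intro hsub
    obtain ⟨_, ⟨j, rfl⟩, hKB⟩ := hWF.2 𝒦 h𝒦sub hfilt Bᶜ hBcl.isOpen_compl hsub
    exact hKB (wfp_subset_sat _ ⟨j, self_mem_Ici, rfl⟩) (hx1 j)
  obtain ⟨x, hx𝒦, hxB⟩ := not_subset.mp hnot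
  rw [notMem_compl_iff] at hxB
  refine ⟨x, hBB₀ hxB, mem_iInter.mpr fun n => ?_⟩
  exact wfp_sat_subset (hWo n) (hSjWsub n) (hx𝒦 _ ⟨n, rfl⟩)

end WFP3

section WFP4
variable [TopologicalSpace X]

/-- Core compact + well-filtered implies locally compact. -/
lemma wfp_cc_wf_lc (hcc : CoreCompact X) (hWF : IsWF X) : LocallyCompactSpace X := by
  refine ⟨fun x n hn => ?_⟩
  obtain ⟨U, hUn, hUo, hxU⟩ := mem_nhds_iff.mp hn
  obtain ⟨V, hVo, hxV, hVU⟩ := hcc x U hUo hxU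
  obtain ⟨W, hW0, hWo, hWV, hWwb⟩ := wfp_chain hcc hUo hVU
  refine ⟨⋂ m, W m, ?_, ?_, ?_⟩
  · exact mem_nhds_iff.mpr ⟨V, fun y hy => mem_iInter.mpr fun m =>
      wayBelow_subset (hWV m) (hWo m) hy, hVo, hxV⟩
  · refine (iInter_subset _ 0).trans ?_
    rw [hW0]; exact hUn
  · apply isCompact_of_finite_subcover
    intro ι Ufam hUo' hcov
    have hex : ∃ m, W m ⊆ ⋃ i, Ufam i := by
      by_contra hcon
      push_neg at hcon
      have hmeet : ∀ m, ((⋃ i, Ufam i)ᶜ ∩ W m).Nonempty := by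
        intro m
        obtain ⟨y, hy1, hy2⟩ := not_subset.mp (hcon m)
        exact ⟨y, hy2, hy1⟩
      obtain ⟨y, hy1, hy2⟩ := wfp_diamond hWF hWo hWwb
        (isClosed_compl_iff.mpr (isOpen_iUnion hUo')) hmeet
      exact hy1 (hcov hy2)
    obtain ⟨m, hm⟩ := hex
    obtain ⟨t, ht⟩ := wayBelow_indexed (hWwb m) Ufam hUo' hm
    exact ⟨t, (iInter_subset _ (m+1)).trans ht⟩

/-- Locally compact + well-filtered implies sober. -/
lemma wfp_lc_wf_sober [LocallyCompactSpace X] (hWF : IsWF X) : IsSober X := by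
  haveI : T0Space X := hWF.1
  intro A hAirr hAcl
  classical
  set G : Set (Set X) := {U | IsOpen U ∧ (U ∩ A).Nonempty} with hGdef
  have hex : ∀ U, U ∈ G → ∃ p : Set X × Set X, p.1 ∈ KSet X ∧ IsOpen p.2 ∧
      (p.2 ∩ A).Nonempty ∧ p.2 ⊆ p.1 ∧ p.1 ⊆ U := by
    rintro U ⟨hUo, a, haU, haA⟩
    obtain ⟨s, hs𝓝, hsU, hscomp⟩ :=
      LocallyCompactSpace.local_compact_nhds a U (hUo.mem_nhds haU)
    refine ⟨⟨wfpSat s, interior s⟩, ⟨⟨a, wfp_subset_sat _ (mem_of_mem_nhds hs𝓝)⟩,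
      wfp_sat_compact hscomp, wfp_isSat_sat _⟩, isOpen_interior,
      ⟨a, mem_interior_iff_mem_nhds.mpr hs𝓝, haA⟩,
      interior_subset.trans (wfp_subset_sat s), wfp_sat_subset hUo hsU⟩
  choose! pf hK hVo hVA hVK hKU using hex
  set 𝒦 : Set (Set X) := (fun U => (pf U).1) '' G with h𝒦def
  have h𝒦 : 𝒦 ⊆ KSet X := by
    rintro _ ⟨U, hU, rfl⟩
    exact hK U hU
  have hGuniv : (univ : Set X) ∈ G := ⟨isOpen_univ, by
    obtain ⟨a, ha⟩ := hAirr.1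
    exact ⟨a, mem_univ a, ha⟩⟩
  have hfilt : FiltFam 𝒦 := by
    refine ⟨⟨_, ⟨univ, hGuniv, rfl⟩⟩, ?_⟩
    rintro _ ⟨U₁, hU₁, rfl⟩ _ ⟨U₂, hU₂, rfl⟩
    have hG3 : ((pf U₁).2 ∩ (pf U₂).2) ∈ G := by
      refine ⟨(hVo _ hU₁).inter (hVo _ hU₂), ?_⟩
      obtain ⟨y, hy⟩ := hAirr.2 _ _ (hVo _ hU₁) (hVo _ hU₂)
        (by obtain ⟨v, h1, h2⟩ := hVA _ hU₁; exact ⟨v, h2, h1⟩)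
        (by obtain ⟨v, h1, h2⟩ := hVA _ hU₂; exact ⟨v, h2, h1⟩)
      exact ⟨y, hy.2, hy.1⟩
    refine ⟨(pf _).1, ⟨_, hG3, rfl⟩, ?_, ?_⟩
    · exact (hKU _ hG3).trans (inter_subset_left.trans (hVK _ hU₁))
    · exact (hKU _ hG3).trans (inter_subset_right.trans (hVK _ hU₂))
  have hnot : ¬ ⋂₀ 𝒦 ⊆ Aᶜ := by
    intro hsub
    obtain ⟨_, ⟨U, hU, rfl⟩, hKA⟩ := hWF.2 𝒦 h𝒦 hfilt Aᶜ hAcl.isOpen_compl hsub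
    obtain ⟨v, hvV, hvA⟩ := hVA U hU
    exact hKA (hVK U hU hvV) hvA
  obtain ⟨x, hx𝒦, hxA'⟩ := not_subset.mp hnot
  rw [notMem_compl_iff] at hxA'
  have hgen : ∀ U, U ∈ G → x ∈ U := fun U hU =>
    hKU U hU (hx𝒦 _ ⟨U, hU, rfl⟩)
  have hAx : A = closure {x} := by
    apply Subset.antisymm
    · intro a ha
      rw [mem_closure_iff]
      intro o ho hao
      exact ⟨x, hgen o ⟨ho, a, hao, ha⟩, rfl⟩
    · exact closure_minimal (singleton_subset_iff.mpr hxA') hAcl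
  refine ⟨x, hAx, ?_⟩
  intro y hy
  have : closure ({y} : Set X) = closure ({x} : Set X) := by rw [← hy, ← hAx]
  exact (inseparable_iff_closure_eq.mpr this).eq

/-- Sober implies well-filtered. -/
lemma wfp_sober_wf [T0Space X] (hsob : IsSober X) : IsWF X := by
  refine ⟨‹T0Space X›, ?_⟩
  intro 𝒦 h𝒦 hfilt U hUo hsub
  by_contra hcon
  push_neg at hcon
  classical
  set ℭ : Set (Set X) := {C | IsClosed C ∧ C ⊆ Uᶜ ∧ ∀ K ∈ 𝒦, (K ∩ C).Nonempty} with hℭdef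
  have hUc : Uᶜ ∈ ℭ := by
    refine ⟨hUo.isClosed_compl, Subset.rfl, fun K hK => ?_⟩
    obtain ⟨y, hy1, hy2⟩ := not_subset.mp (hcon K hK)
    exact ⟨y, hy1, hy2⟩
  have hchaincond : ∀ c ⊆ ℭ, IsChain (· ⊆ ·) c → c.Nonempty →
      ∃ lb ∈ ℭ, ∀ s ∈ c, lb ⊆ s := by
    intro c hcsub hchain hcne
    refine ⟨⋂₀ c, ⟨isClosed_sInter fun C hC => (hcsub hC).1, ?_, ?_⟩,
      fun s hs => sInter_subset_of_mem hs⟩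
    · obtain ⟨C, hC⟩ := hcne
      exact (sInter_subset_of_mem hC).trans (hcsub hC).2.1
    · intro K hK
      by_contra hemp
      rw [not_nonempty_iff_eq_empty] at hemp
      have hcov : K ⊆ ⋃₀ (compl '' c) := by
        intro x hx
        by_contra hxnot
        have hxin : x ∈ ⋂₀ c := by
          intro C hC
          by_contra hxC
          exact hxnot ⟨Cᶜ, ⟨C, hC, rfl⟩, hxC⟩
        have hmem : x ∈ (K ∩ ⋂₀ c) := ⟨hx, hxin⟩
        rw [hemp] at hmem
        exact hmem
      have hdir : DirectedOn (· ⊆ ·) (compl '' c) := by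
        rintro _ ⟨C₁, hC₁, rfl⟩ _ ⟨C₂, hC₂, rfl⟩
        rcases eq_or_ne C₁ C₂ with rfl | hne
        · exact ⟨C₁ᶜ, ⟨C₁, hC₁, rfl⟩, Subset.rfl, Subset.rfl⟩
        · rcases hchain hC₁ hC₂ hne with h | h
          · exact ⟨C₁ᶜ, ⟨C₁, hC₁, rfl⟩, Subset.rfl, compl_subset_compl.mpr h⟩
          · exact ⟨C₂ᶜ, ⟨C₂, hC₂, rfl⟩, compl_subset_compl.mpr h, Subset.rfl⟩
      obtain ⟨C₀, hC₀⟩ := hcne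
      obtain ⟨_, ⟨C', hC', rfl⟩, habs⟩ := wfp_compact_absorb (h𝒦 hK).2.1
        (by rintro _ ⟨C₀', hC₀', rfl⟩; exact (hcsub hC₀').1.isOpen_compl) hdir
        ⟨C₀ᶜ, ⟨C₀, hC₀, rfl⟩⟩ hcov
      obtain ⟨y, hy1, hy2⟩ := (hcsub hC').2.2 K hK
      exact habs hy1 hy2
  obtain ⟨B, _hBsub, hBmin⟩ := zorn_superset_nonempty ℭ hchaincond Uᶜ hUc
  obtain ⟨hBcl, hBU, hBK⟩ := hBmin.1
  have hBirr : IsIrreducible B := by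
    constructor
    · obtain ⟨K, hK⟩ := hfilt.1
      obtain ⟨y, _, hyB⟩ := hBK K hK
      exact ⟨y, hyB⟩
    · intro u v huo hvo hu hv
      by_contra hemp
      rw [not_nonempty_iff_eq_empty] at hemp
      have h1 : ∃ K ∈ 𝒦, K ∩ (B \ u) = ∅ := by
        by_contra hall
        push_neg at hall
        have hmem : B \ u ∈ ℭ := by
          refine ⟨hBcl.inter huo.isClosed_compl, diff_subset.trans hBU, ?_⟩
          intro K hK
          exact hall K hK
        have hBsub' := hBmin.2 hmem diff_subset
        obtain ⟨y, hyB, hyu⟩ := hu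
        exact (hBsub' hyB).2 hyu
      have h2 : ∃ K ∈ 𝒦, K ∩ (B \ v) = ∅ := by
        by_contra hall
        push_neg at hall
        have hmem : B \ v ∈ ℭ := by
          refine ⟨hBcl.inter hvo.isClosed_compl, diff_subset.trans hBU, ?_⟩
          intro K hK
          exact hall K hK
        have hBsub' := hBmin.2 hmem diff_subset
        obtain ⟨y, hyB, hyv⟩ := hv
        exact (hBsub' hyB).2 hyv
      obtain ⟨K₁, hK₁, hK₁e⟩ := h1
      obtain ⟨K₂, hK₂, hK₂e⟩ := h2
      obtain ⟨K₃, hK₃, h31, h32⟩ := hfilt.2 K₁ hK₁ K₂ hK₂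
      obtain ⟨y, hyK₃, hyB⟩ := hBK K₃ hK₃
      have hyu : y ∈ u := by
        by_contra hyu
        have : y ∈ K₁ ∩ (B \ u) := ⟨h31 hyK₃, hyB, hyu⟩
        rw [hK₁e] at this
        exact this
      have hyv : y ∈ v := by
        by_contra hyv
        have : y ∈ K₂ ∩ (B \ v) := ⟨h32 hyK₃, hyB, hyv⟩
        rw [hK₂e] at this
        exact this
      have : y ∈ B ∩ (u ∩ v) := ⟨hyB, hyu, hyv⟩
      rw [hemp] at this
      exact this
  obtain ⟨x, hxeq, -⟩ := hsob B hBirr hBcl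
  have hxB : x ∈ B := by
    rw [hxeq]
    exact subset_closure rfl
  have hxK : ∀ K ∈ 𝒦, x ∈ K := by
    intro K hK
    obtain ⟨y, hyK, hyB⟩ := hBK K hK
    have hy : y ∈ closure ({x} : Set X) := by rw [← hxeq]; exact hyB
    have hsat := (h𝒦 hK).2.2
    rw [hsat]
    intro O hO
    obtain ⟨z, hzO, hz⟩ := mem_closure_iff.mp hy O hO.1 (hO.2 hyK)
    rw [mem_singleton_iff] at hz
    rw [← hz]
    exact hzO
  have hxU : x ∈ U := hsub fun K hK => hxK K hK
  exact hBU hxB hxU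

/-- Locally compact implies core compact. -/
lemma wfp_lc_cc [LocallyCompactSpace X] : CoreCompact X := by
  intro x U hUo hxU
  obtain ⟨s, hs𝓝, hsU, hscomp⟩ :=
    LocallyCompactSpace.local_compact_nhds x U (hUo.mem_nhds hxU)
  refine ⟨interior s, isOpen_interior, mem_interior_iff_mem_nhds.mpr hs𝓝, ?_⟩
  intro 𝒞 h𝒞o hcov
  obtain ⟨t, ht⟩ := hscomp.elim_finite_subcover (fun C : 𝒞 => (C : Set X))
    (fun C => h𝒞o C C.2) (by rw [← sUnion_eq_iUnion]; exact hsU.trans hcov)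
  refine ⟨(fun C : 𝒞 => (C : Set X)) '' ↑t, ?_, t.finite_toSet.image _, ?_⟩
  · rintro _ ⟨C, _, rfl⟩
    exact C.2
  · refine interior_subset.trans (ht.trans ?_)
    intro y hy
    obtain ⟨C, hC, hyC⟩ := mem_iUnion₂.mp hy
    exact ⟨C, ⟨C, hC, rfl⟩, hyC⟩

end WFP4


/-- for a T0 space, the four conditions (locally compact + sober,
locally compact + well-filtered, core compact + sober, core compact + well-filtered)
are equivalent. -/
theorem stmt4 {X : Type u} [TopologicalSpace X] [T0Space X] :
    List.TFAE [LocallyCompactSpace X ∧ IsSober X,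
      LocallyCompactSpace X ∧ IsWF X,
      CoreCompact X ∧ IsSober X,
      CoreCompact X ∧ IsWF X] := by
  tfae_have 1 → 2
  · rintro ⟨hlc, hs⟩
    exact ⟨hlc, wfp_sober_wf hs⟩
  tfae_have 2 → 4
  · rintro ⟨hlc, hw⟩
    haveI := hlc
    exact ⟨wfp_lc_cc, hw⟩
  tfae_have 4 → 3
  · rintro ⟨hcc, hw⟩
    haveI := wfp_cc_wf_lc hcc hw
    exact ⟨hcc, wfp_lc_wf_sober hw⟩
  tfae_have 3 → 1
  · rintro ⟨hcc, hs⟩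
    have hw := wfp_sober_wf hs
    haveI := wfp_cc_wf_lc hcc hw
    exact ⟨inferInstance, hs⟩
  tfae_finish
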